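/- Let A be a set of k ≥ 7 nonnegative integers with 0 ∈ A, and let H = {0, 1, …, r} with 2 ≤ r ≤ k−2. If |H^A| = rk − r(r+1)/2 + 1, then A = {0, d, 2d, …, (k−1)d} for some positive integer d. -/

import Mathlib

open Finset Pointwise

/-- `itSum h A` is the sumset `hA`: integers expressible as a sum of `h` elements
of `A` (repetitions allowed); `0A = {0}`. -/
def itSum : ℕ → Finset ℤ → Finset ℤ
  | 0, _ => {0}
  | n + 1, A => A + itSum n A

/-- `sumsetH H A = ⋃ h ∈ H, hA`. -/
def sumsetH (H : Finset ℕ) (A : Finset ℤ) : Finset ℤ :=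
  H.biUnion fun h => itSum h A

/-- `rSum h A` is the restricted sumset `h^A`: integers expressible as a sum of `h`
pairwise distinct elements of `A`; `0^A = {0}`. -/
def rSum (h : ℕ) (A : Finset ℤ) : Finset ℤ :=
  (A.powersetCard h).image fun B => B.sum id

/-- `rSumH H A = ⋃ h ∈ H, h^A`. -/
def rSumH (H : Finset ℕ) (A : Finset ℤ) : Finset ℤ :=
  H.biUnion fun h => rSum h A

theorem sumIcc_eq (k r : ℕ) (hrk : r ≤ k) :
    ∑ h ∈ Icc 1 r, (k - h) = r * k - r * (r + 1) / 2 := by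
  have hd := Finset.sum_tsub_distrib (f := fun _ => k) (g := fun h => h) (Icc 1 r)
    (fun h hh => by simp only [mem_Icc] at hh; show h ≤ k; omega)
  rw [hd]
  have h1 : ∑ _h ∈ Icc 1 r, k = r * k := by
    rw [Finset.sum_const, Nat.card_Icc]; simp [Nat.mul_comm]
  have h2 : ∑ h ∈ Icc 1 r, h = r * (r + 1) / 2 := by
    have he : Icc 1 r = Ico 1 (r+1) := by rw [Finset.Ico_add_one_right_eq_Icc]
    rw [he]
    have h3 := Finset.sum_range_id (r+1)
    rw [Finset.range_eq_Ico] at h3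
    have h4 : ∑ h ∈ Ico 0 (r+1), h = 0 + ∑ h ∈ Ico 1 (r+1), h := by
      exact Finset.sum_eq_sum_Ico_succ_bot (by omega) _
    simp only [zero_add] at h4
    rw [← h4, h3]; simp [Nat.mul_comm]
  rw [h1, h2]



theorem restricted_sumset_card_inverse_interval_zero_mem (k r : ℕ) (hk7 : 7 ≤ k)
    (hr2 : 2 ≤ r) (hrk : r ≤ k - 2)
    (A : Finset ℤ) (hAnonneg : ∀ a ∈ A, 0 ≤ a) (h0A : (0 : ℤ) ∈ A) (hk : A.card = k)
    (heq : (rSumH (Finset.Icc 0 r) A).card = r * k - r * (r + 1) / 2 + 1) :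
    ∃ d : ℤ, 0 < d ∧ A = (Finset.range k).image (fun i : ℕ => (i : ℤ) * d) := by
  classical
  set a : ℕ → ℤ := fun i => if h : i < k then A.orderIsoOfFin hk ⟨i, h⟩ else 0 with ha_def
  have ha_mem : ∀ i, i < k → a i ∈ A := by
    intro i hi
    simp only [ha_def, dif_pos hi]
    exact (A.orderIsoOfFin hk ⟨i, hi⟩).2
  have ha_mono : ∀ i j, i < j → j < k → a i < a j := by
    intro i j hij hj
    have hi : i < k := hij.trans hj
    simp only [ha_def, dif_pos hi, dif_pos hj]
    exact_mod_cast (A.orderIsoOfFin hk).strictMono (show (⟨i,hi⟩ : Fin k) < ⟨j,hj⟩ from hij)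
  have ha_surj : ∀ x ∈ A, ∃ i, i < k ∧ a i = x := by
    intro x hx
    obtain ⟨i, hi⟩ := (A.orderIsoOfFin hk).surjective ⟨x, hx⟩
    exact ⟨i.1, i.2, by simp only [ha_def, dif_pos i.2]; rw [Fin.eta, hi]⟩
  have ha0 : a 0 = 0 := by
    obtain ⟨i, hi, hai⟩ := ha_surj 0 h0A
    have h1 : a 0 ≤ 0 := by
      rcases Nat.eq_zero_or_pos i with h | h
      · rw [← hai, h]
      · exact le_of_lt (hai ▸ ha_mono 0 i h hi)
    have h2 : 0 ≤ a 0 := hAnonneg _ (ha_mem 0 (by omega))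
    omega
  have ha_pos : ∀ i, 1 ≤ i → i < k → 0 < a i := fun i h1 h2 => ha0 ▸ ha_mono 0 i h1 h2
  -- the partial sums of top elements
  set S : ℕ → ℤ := fun h => ∑ j ∈ Finset.Ico (k - h + 1) k, a j with hS_def
  have hS1 : S 1 = 0 := by
    have : k - 1 + 1 = k := by omega
    simp [hS_def, this]
  have hSstep : ∀ h, 1 ≤ h → h < k → S (h + 1) = a (k - h) + S h := by
    intro h h1 h2
    have : Finset.Ico (k - (h+1) + 1) k = insert (k - h) (Finset.Ico (k - h + 1) k) := by
      ext x; simp only [mem_Ico, mem_insert]; omega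
    rw [hS_def]
    simp only
    rw [this, Finset.sum_insert (by simp)]
  have hSmono : ∀ g h, g ≤ h → S g ≤ S h := by
    intro g h hgh
    apply Finset.sum_le_sum_of_subset_of_nonneg
    · apply Finset.Ico_subset_Ico_left; omega
    · intro i hi _
      rcases Nat.lt_or_ge i k with h' | h'
      · exact hAnonneg _ (ha_mem i h')
      · simp [ha_def, Nat.not_lt.mpr h']
  have hS_nonneg : ∀ h, 0 ≤ S h := by
    intro h
    apply Finset.sum_nonneg
    intro i hi
    rcases Nat.lt_or_ge i k with h' | h'
    · exact hAnonneg _ (ha_mem i h')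
    · simp [ha_def, Nat.not_lt.mpr h']
  have ha_injOn : Set.InjOn a (Finset.range k) := by
    intro i hi j hj hij
    simp only [coe_range, Set.mem_Iio] at hi hj
    by_contra hne
    rcases Nat.lt_or_ge i j with h | h
    · exact absurd hij (ne_of_lt (ha_mono i j h hj))
    · exact absurd hij.symm (ne_of_lt (ha_mono j i (by omega) hi))
  have hmem_rSum : ∀ B0 : Finset ℕ, ↑B0 ⊆ Set.Iio k → (∑ j ∈ B0, a j) ∈ rSum B0.card A := by
    intro B0 hB0
    have hsub : (B0 : Set ℕ) ⊆ ↑(Finset.range k) := by rwa [coe_range]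
    refine Finset.mem_image.2 ⟨B0.image a, ?_, ?_⟩
    · rw [Finset.mem_powersetCard]
      constructor
      · intro x hx
        obtain ⟨i, hi, rfl⟩ := Finset.mem_image.1 hx
        exact ha_mem i (hB0 hi)
      · exact Finset.card_image_of_injOn (ha_injOn.mono hsub)
    · rw [Finset.sum_image (fun x hx y hy => ha_injOn (hsub hx) (hsub hy))]
      simp
  -- the chain C
  set C : Finset ℤ :=
    insert 0 ((Icc 1 r).biUnion fun h => (Icc 1 (k - h)).image fun i => a i + S h) with hC_def
  have hSsum : ∀ h, S h = ∑ j ∈ Finset.Ico (k - h + 1) k, a j := fun h => rfl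
  have hchain_mem : ∀ h i, 1 ≤ h → h ≤ r → 1 ≤ i → i ≤ k - h →
      a i + S h ∈ rSumH (Finset.Icc 0 r) A := by
    intro h i h1 h2 hi1 hi2
    have hik : i < k - h + 1 := by omega
    set B0 : Finset ℕ := insert i (Finset.Ico (k - h + 1) k) with hB0_def
    have hnotmem : i ∉ Finset.Ico (k - h + 1) k := by simp [mem_Ico]; omega
    have hcard : B0.card = h := by
      rw [hB0_def, Finset.card_insert_of_notMem hnotmem, Nat.card_Ico]; omega
    have hsum : ∑ j ∈ B0, a j = a i + S h := by
      rw [hB0_def, Finset.sum_insert hnotmem, hSsum]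
    refine Finset.mem_biUnion.2 ⟨h, by simp [mem_Icc]; omega, ?_⟩
    rw [← hsum, ← hcard]
    apply hmem_rSum
    intro x hx
    simp only [hB0_def, coe_insert, Set.mem_insert_iff, coe_Ico, Set.mem_Ico] at hx
    simp only [Set.mem_Iio]
    omega
  have hCsub : C ⊆ rSumH (Finset.Icc 0 r) A := by
    intro x hx
    rw [hC_def, Finset.mem_insert] at hx
    rcases hx with rfl | hx
    · refine Finset.mem_biUnion.2 ⟨0, by simp, ?_⟩
      have := hmem_rSum ∅ (by simp)
      simpa using this
    · obtain ⟨h, hh, hx⟩ := Finset.mem_biUnion.1 hx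
      obtain ⟨i, hi, rfl⟩ := Finset.mem_image.1 hx
      simp only [mem_Icc] at hh hi
      exact hchain_mem h i hh.1 hh.2 hi.1 hi.2
  -- bounds on chain elements
  have hBh_bounds : ∀ h, 1 ≤ h → h ≤ r → ∀ x ∈ (Icc 1 (k - h)).image fun i => a i + S h,
      S h < x ∧ x ≤ S (h + 1) := by
    intro h h1 h2 x hx
    obtain ⟨i, hi, rfl⟩ := Finset.mem_image.1 hx
    simp only [mem_Icc] at hi
    have hik : i < k := by omega
    constructor
    · have := ha_pos i hi.1 hik
      omega
    · rw [hSstep h h1 (by omega)]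
      have : a i ≤ a (k - h) := by
        rcases Nat.lt_or_ge i (k - h) with h' | h'
        · exact le_of_lt (ha_mono i (k - h) h' (by omega))
        · have : i = k - h := by omega
          rw [this]
      omega
  have hU_card : ((Icc 1 r).biUnion fun h => (Icc 1 (k - h)).image fun i => a i + S h).card
      = ∑ h ∈ Icc 1 r, (k - h) := by
    rw [Finset.card_biUnion]
    · apply Finset.sum_congr rfl
      intro h hh
      simp only [mem_Icc] at hh
      have hinj : Set.InjOn (fun i => a i + S h) (Icc 1 (k - h)) := by
        intro i hi j hj hij
        simp only [coe_Icc, Set.mem_Icc] at hi hj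
        have : a i = a j := by simpa using hij
        exact ha_injOn (by simp; omega) (by simp; omega) this
      rw [Finset.card_image_of_injOn hinj, Nat.card_Icc]
      omega
    · intro h hh h' hh' hne
      simp only [mem_coe, mem_Icc] at hh hh'
      rw [Function.onFun, Finset.disjoint_left]
      intro x hx hx'
      have b1 := hBh_bounds h hh.1 hh.2 x hx
      have b2 := hBh_bounds h' hh'.1 hh'.2 x hx'
      rcases Nat.lt_or_ge h h' with h'' | h''
      · have := hSmono (h + 1) h' (by omega)
        omega
      · have := hSmono (h' + 1) h (by omega)
        omega
  have h0notU : (0 : ℤ) ∉ (Icc 1 r).biUnion fun h => (Icc 1 (k - h)).image fun i => a i + S h := by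
    intro h0
    obtain ⟨h, hh, h0⟩ := Finset.mem_biUnion.1 h0
    simp only [mem_Icc] at hh
    have := (hBh_bounds h hh.1 hh.2 0 h0).1
    have := hS_nonneg h
    omega
  have hC_card : C.card = r * k - r * (r + 1) / 2 + 1 := by
    rw [hC_def, Finset.card_insert_of_notMem h0notU, hU_card,
      sumIcc_eq k r (by omega)]
  have hC_eq : rSumH (Finset.Icc 0 r) A = C :=
    (Finset.eq_of_subset_of_card_le hCsub (by rw [heq, hC_card])).symm
  have ha_mono_le : ∀ i j, i ≤ j → j < k → a i ≤ a j := by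
    intro i j hij hj
    rcases Nat.lt_or_ge i j with h | h
    · exact le_of_lt (ha_mono i j h hj)
    · have : i = j := by omega
      rw [this]
  have h2sum : ∀ i j, i < j → j < k → a i + a j ∈ rSumH (Finset.Icc 0 r) A := by
    intro i j hij hj
    refine Finset.mem_biUnion.2 ⟨2, by simp [mem_Icc]; omega, ?_⟩
    have hne : i ∉ ({j} : Finset ℕ) := by simp; omega
    have hcard : ({i, j} : Finset ℕ).card = 2 := by
      rw [Finset.card_insert_of_notMem hne, Finset.card_singleton]
    have hsum : ∑ l ∈ ({i, j} : Finset ℕ), a l = a i + a j := by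
      rw [Finset.sum_insert hne, Finset.sum_singleton]
    rw [← hsum, ← hcard]
    apply hmem_rSum
    intro x hx
    simp only [coe_insert, Set.mem_insert_iff, coe_singleton, Set.mem_singleton_iff] at hx
    simp only [Set.mem_Iio]
    omega
  have hS2 : S 2 = a (k - 1) := by
    rw [hSstep 1 le_rfl (by omega), hS1, add_zero]
  have hS3 : S 3 = a (k - 2) + a (k - 1) := by
    rw [hSstep 2 (by omega) (by omega), hS2]
  -- structure lemma: small elements of C are in the image of a
  have hL1 : ∀ x ∈ C, 0 < x → x < a 1 + a (k - 1) → ∃ i, i < k ∧ x = a i := by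
    intro x hx hx0 hxlt
    rw [hC_def, Finset.mem_insert] at hx
    rcases hx with rfl | hx
    · omega
    · obtain ⟨h, hh, hx⟩ := Finset.mem_biUnion.1 hx
      obtain ⟨i, hi, rfl⟩ := Finset.mem_image.1 hx
      simp only [mem_Icc] at hh hi
      rcases Nat.eq_or_lt_of_le hh.1 with h1 | h1
      · refine ⟨i, by omega, ?_⟩
        rw [← h1, hS1, add_zero]
      · exfalso
        have hs : S 2 ≤ S h := hSmono 2 h (by omega)
        have hai : a 1 ≤ a i := ha_mono_le 1 i hi.1 (by omega)
        rw [hS2] at hs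
        omega
  have key : ∀ m, m ≤ k - 4 → a 1 + a (k - 2 - m) = a (k - 1 - m) := by
    intro m
    induction m with
    | zero =>
      intro _
      simp only [Nat.sub_zero]
      have hmem : a 1 + a (k - 2) ∈ rSumH (Finset.Icc 0 r) A :=
        h2sum 1 (k - 2) (by omega) (by omega)
      rw [hC_eq] at hmem
      have hpos : 0 < a 1 + a (k - 2) := by
        have := ha_pos 1 le_rfl (by omega)
        have := ha_pos (k - 2) (by omega) (by omega)
        omega
      have hlt : a 1 + a (k - 2) < a 1 + a (k - 1) := by
        have := ha_mono (k - 2) (k - 1) (by omega) (by omega)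
        omega
      obtain ⟨j, hj, hje⟩ := hL1 _ hmem hpos hlt
      have hgt : a (k - 2) < a j := by
        have := ha_pos 1 le_rfl (by omega)
        omega
      have hjk : k - 2 < j := by
        by_contra hcon
        exact absurd hgt (not_lt.2 (ha_mono_le j (k - 2) (by omega) (by omega)))
      have : j = k - 1 := by omega
      rw [hje, this]
    | succ n ih =>
      intro hn
      have ihv := ih (by omega)
      set i := k - 2 - (n + 1) with hi_def
      have hik : i + 1 = k - 2 - n := by omega
      have hmem : a 1 + a i ∈ rSumH (Finset.Icc 0 r) A := h2sum 1 i (by omega) (by omega)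
      rw [hC_eq] at hmem
      have hpos : 0 < a 1 + a i := by
        have := ha_pos 1 le_rfl (by omega)
        have := ha_pos i (by omega) (by omega)
        omega
      have hlt : a 1 + a i < a 1 + a (k - 1) := by
        have := ha_mono i (k - 1) (by omega) (by omega)
        omega
      obtain ⟨j, hj, hje⟩ := hL1 _ hmem hpos hlt
      have hgt : a i < a j := by
        have := ha_pos 1 le_rfl (by omega)
        omega
      have hj1 : i < j := by
        by_contra hcon
        exact absurd hgt (not_lt.2 (ha_mono_le j i (by omega) (by omega)))
      have hub : a j < a (i + 2) := by
        have h1 : a i < a (i + 1) := ha_mono i (i + 1) (by omega) (by omega)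
        have h2 : a 1 + a (i + 1) = a (i + 2) := by
          rw [hik, show i + 2 = k - 1 - n by omega]
          exact ihv
        omega
      have hj2 : j < i + 2 := by
        by_contra hcon
        exact absurd hub (not_lt.2 (ha_mono_le (i + 2) j (by omega) hj))
      have : j = i + 1 := by omega
      rw [hje, this]
      congr 1
      omega
  have key' : ∀ i, 2 ≤ i → i ≤ k - 2 → a 1 + a i = a (i + 1) := by
    intro i h2 hik
    have := key (k - 2 - i) (by omega)
    rwa [show k - 2 - (k - 2 - i) = i by omega, show k - 1 - (k - 2 - i) = i + 1 by omega]
      at this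
  have hakey : a 1 + a (k - 2) = a (k - 1) := by
    have := key' (k - 2) (by omega) le_rfl
    rwa [show k - 2 + 1 = k - 1 by omega] at this
  -- the element a 2 + a (k-2) forces a 2 = 2 * a 1
  have ha2 : a 2 = 2 * a 1 := by
    have hmem : a 2 + a (k - 2) ∈ rSumH (Finset.Icc 0 r) A := h2sum 2 (k - 2) (by omega) (by omega)
    rw [hC_eq, hC_def, Finset.mem_insert] at hmem
    have ha12 : a 1 < a 2 := ha_mono 1 2 (by omega) (by omega)
    have hpos1 : 0 < a 1 := ha_pos 1 le_rfl (by omega)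
    rcases hmem with h0 | hmem
    · exfalso
      have := ha_pos (k - 2) (by omega) (by omega)
      have := ha_pos 2 (by omega) (by omega)
      omega
    obtain ⟨h, hh, hx⟩ := Finset.mem_biUnion.1 hmem
    obtain ⟨i, hi, hxe⟩ := Finset.mem_image.1 hx
    simp only [mem_Icc] at hh hi
    -- a 2 + a (k-2) > a (k-1) and < a 2 + a (k-1)
    have hlow : a (k - 1) < a 2 + a (k - 2) := by omega
    have hhigh : a 2 + a (k - 2) < a 2 + a (k - 1) := by
      have := ha_mono (k - 2) (k - 1) (by omega) (by omega)
      omega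
    have h2k1 : a 2 < a (k - 1) := ha_mono 2 (k - 1) (by omega) (by omega)
    rcases Nat.lt_or_ge h 2 with h1 | h1
    · -- h = 1 : impossible
      exfalso
      have : h = 1 := by omega
      subst this
      rw [hS1, add_zero] at hxe
      have : a i ≤ a (k - 1) := ha_mono_le i (k - 1) (by omega) (by omega)
      omega
    rcases Nat.lt_or_ge h 3 with h3 | h3
    · -- h = 2 : the main case
      have : h = 2 := by omega
      subst this
      rw [hS2] at hxe
      have hi2 : a i < a 2 := by omega
      have hi0 : 0 < a i := ha_pos i hi.1 (by omega)
      have hilt : i < 2 := by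
        by_contra hcon
        exact absurd hi2 (not_lt.2 (ha_mono_le 2 i (by omega) (by omega)))
      have : i = 1 := by omega
      subst this
      omega
    · -- h ≥ 3 : impossible
      exfalso
      have hs : S 3 ≤ S h := hSmono 3 h h3
      rw [hS3] at hs
      have hai : a 1 ≤ a i := ha_mono_le 1 i (by omega) (by omega)
      omega
  have hfinal : ∀ i, i < k → a i = (i : ℤ) * a 1 := by
    intro i
    induction i with
    | zero => intro _; simp [ha0]
    | succ n ih =>
      intro hn
      rcases Nat.lt_or_ge n 2 with h2 | h2
      · interval_cases n
        · simp
        · rw [ha2]; push_cast; ring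
      · have hv := key' n h2 (by omega)
        rw [← hv, ih (by omega)]
        push_cast
        ring
  -- conclusion
  refine ⟨a 1, ha_pos 1 le_rfl (by omega), ?_⟩
  have hsub : (Finset.range k).image (fun i : ℕ => (i : ℤ) * a 1) ⊆ A := by
    intro x hx
    obtain ⟨i, hi, rfl⟩ := Finset.mem_image.1 hx
    rw [Finset.mem_range] at hi
    rw [← hfinal i hi]
    exact ha_mem i hi
  have hcard : ((Finset.range k).image fun i : ℕ => (i : ℤ) * a 1).card = k := by
    rw [Finset.card_image_of_injOn, Finset.card_range]
    intro i _ j _ hij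
    have hpos := ha_pos 1 le_rfl (by omega)
    have : (i : ℤ) = j := mul_right_cancel₀ (ne_of_gt hpos) hij
    exact_mod_cast this
  exact (Finset.eq_of_subset_of_card_le hsub (by rw [hk, hcard])).symm
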